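/- Let {F_m}_{m∈M} be a finite family of maps on ℝⁿ and suppose for each m there is a 'canonical trajectory' x^(m) : ℕ → ℝⁿ and a common constant λ < 1 with ‖F_m(x) - x^(m)(k+1)‖ ≤ λ‖x - x^(m)(k)‖ for all x ∈ ℝⁿ and all k. Suppose sup_k max_{m₁,m₂} ‖x^(m₁)(k) - x^(m₂)(k)‖ ≤ R < ∞. Then every trajectory x(k+1) = F_{σ(k)}(x(k)), for any selection sequence σ : ℕ → M, satisfies dist(x(k), X̄(k)) ≤ λR/(1-λ) + (dist(x(0), X̄(0)) - λR/(1-λ))λᵏ for all k ≥ 1, where X̄(k) is the convex hull of {x^(m)(k) : m ∈ M} and dist is Euclidean distance to a set. -/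

import Mathlib

open Metric

/-- Deterministic core of Theorem 2: any trajectory of the iterated function system stays
within a geometrically-decaying distance of the convex hull of the canonical trajectories. -/
theorem irf_trajectory_dist_to_hull_bound {n : ℕ} {M : Type*} [Fintype M] [Nonempty M]
    (F : M → EuclideanSpace ℝ (Fin n) → EuclideanSpace ℝ (Fin n))
    (traj : M → ℕ → EuclideanSpace ℝ (Fin n))
    (lam : ℝ) (hlam0 : 0 ≤ lam) (hlam1 : lam < 1)
    (hcontr : ∀ m (x : EuclideanSpace ℝ (Fin n)) k,
      ‖F m x - traj m (k + 1)‖ ≤ lam * ‖x - traj m k‖)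
    (R : ℝ) (hR : ∀ k, ∀ m₁ m₂ : M, ‖traj m₁ k - traj m₂ k‖ ≤ R)
    (σ : ℕ → M) (x : ℕ → EuclideanSpace ℝ (Fin n))
    (hx : ∀ k, x (k + 1) = F (σ k) (x k)) :
    ∀ k, 1 ≤ k →
      infDist (x k) (convexHull ℝ (Set.range fun m => traj m k)) ≤
        lam * R / (1 - lam) +
          (infDist (x 0) (convexHull ℝ (Set.range fun m => traj m 0)) -
            lam * R / (1 - lam)) * lam ^ k := by
  set D := lam * R / (1 - lam) with hD
  set hull : ℕ → Set (EuclideanSpace ℝ (Fin n)) :=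
    fun k => convexHull ℝ (Set.range fun m => traj m k) with hhull
  have h1lam : (0:ℝ) < 1 - lam := by linarith
  have hDeq : lam * D + lam * R = D := by
    rw [hD]
    field_simp
    ring
  have hne : ∀ k, (hull k).Nonempty := fun k =>
    ⟨traj (Classical.arbitrary M) k,
      subset_convexHull ℝ _ ⟨Classical.arbitrary M, rfl⟩⟩
  have hcpt : ∀ k, IsCompact (hull k) := fun k =>
    (Set.finite_range _).isCompact_convexHull (𝕜 := ℝ)
  -- one-step estimate
  have step : ∀ k, infDist (x (k + 1)) (hull (k + 1)) ≤
      lam * infDist (x k) (hull k) + lam * R := by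
    intro k
    obtain ⟨p, hp, hpd⟩ := (hcpt k).exists_infDist_eq_dist (hne k) (x k)
    have hpball : dist p (traj (σ k) k) ≤ R := by
      have hsub : hull k ⊆ closedBall (traj (σ k) k) R := by
        apply convexHull_min _ (convex_closedBall _ _)
        rintro y ⟨m, rfl⟩
        simpa [mem_closedBall, dist_eq_norm] using hR k m (σ k)
      simpa [mem_closedBall] using hsub hp
    have hmem : traj (σ k) (k + 1) ∈ hull (k + 1) :=
      subset_convexHull ℝ _ ⟨σ k, rfl⟩
    calc infDist (x (k + 1)) (hull (k + 1))
        ≤ dist (x (k + 1)) (traj (σ k) (k + 1)) := infDist_le_dist_of_mem hmem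
      _ = ‖F (σ k) (x k) - traj (σ k) (k + 1)‖ := by rw [hx k, dist_eq_norm]
      _ ≤ lam * ‖x k - traj (σ k) k‖ := hcontr _ _ _
      _ ≤ lam * (‖x k - p‖ + ‖p - traj (σ k) k‖) := by
          apply mul_le_mul_of_nonneg_left _ hlam0
          have := dist_triangle (x k) p (traj (σ k) k)
          simpa [dist_eq_norm] using this
      _ ≤ lam * (infDist (x k) (hull k) + R) := by
          apply mul_le_mul_of_nonneg_left _ hlam0
          have h1 : ‖x k - p‖ = infDist (x k) (hull k) := by
            rw [hpd, dist_eq_norm]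
          have h2 : ‖p - traj (σ k) k‖ ≤ R := by
            rwa [← dist_eq_norm]
          linarith
      _ = lam * infDist (x k) (hull k) + lam * R := by ring
  -- induction
  have main : ∀ k, infDist (x k) (hull k) ≤ D + (infDist (x 0) (hull 0) - D) * lam ^ k := by
    intro k
    induction k with
    | zero => simp
    | succ k ih =>
        calc infDist (x (k + 1)) (hull (k + 1))
            ≤ lam * infDist (x k) (hull k) + lam * R := step k
          _ ≤ lam * (D + (infDist (x 0) (hull 0) - D) * lam ^ k) + lam * R :=
              by nlinarith
          _ = D + (infDist (x 0) (hull 0) - D) * lam ^ (k + 1) := by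
              rw [pow_succ]; nlinarith [hDeq]
  intro k _
  exact main k
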